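/- For all integers j ≥ 2 and k ≥ 7j³ such that k + j is even, the weak monarchy function is defined by its Chow parameters: for every x ∈ {−1,1}^k, WMON_{k,j}(x) = sign(Σ_{i=1}^k f̂({i})·x_i), where f = WMON_{k,j}. -/

import Mathlib

open Finset

/-- sign(z) = 1 if z > 0 and 0 otherwise. -/
noncomputable def Rsign (z : ℝ) : ℝ := if 0 < z then 1 else 0

/-- Encoding of {-1,1}: `true ↦ 1`, `false ↦ -1`. -/
def pm (b : Bool) : ℝ := if b then 1 else -1

/-- The weak monarchy function WMON_{k,j}(x) = sign(j·x_1 + x_2 + ⋯ + x_k). -/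
noncomputable def WMON (k j : ℕ) (x : Fin k → Bool) : ℝ :=
  Rsign (∑ i : Fin k, (if (i : ℕ) = 0 then (j : ℝ) else 1) * pm (x i))

/-- The Chow parameter (degree-1 Fourier coefficient) f̂({i}) = 2^{-k}·Σ_x f(x)·x_i. -/
noncomputable def chow (k : ℕ) (f : (Fin k → Bool) → ℝ) (i : Fin k) : ℝ :=
  (∑ x, f x * pm (x i)) / 2 ^ k

@[simp] lemma pm_true : pm true = 1 := rfl
@[simp] lemma pm_false : pm false = -1 := rfl

def cnt {n : ℕ} (y : Fin n → Bool) : ℕ := (univ.filter fun i => y i).card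

lemma sum_pm {n : ℕ} (y : Fin n → Bool) :
    ∑ i, pm (y i) = 2 * (cnt y : ℝ) - n := by
  classical
  have h1 : ∑ i, pm (y i)
      = ∑ i ∈ univ.filter (fun i => y i), (1:ℝ)
        + ∑ i ∈ univ.filter (fun i => ¬ y i), (-1:ℝ) := by
    rw [← Finset.sum_filter_add_sum_filter_not univ (fun i => y i)]
    congr 1 <;> apply Finset.sum_congr rfl <;> intro i hi <;>
      simp only [Finset.mem_filter] at hi <;> simp [pm, hi.2]
  have h2 : (univ.filter (fun i => y i)).card + (univ.filter (fun i => ¬ y i)).card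
      = n := by
    rw [Finset.card_filter_add_card_filter_not]
    simp
  rw [h1]
  simp only [Finset.sum_const, nsmul_eq_mul, mul_one, mul_neg_one]
  have := congrArg (fun m : ℕ => (m : ℝ)) h2
  push_cast at this ⊢
  unfold cnt
  linarith

lemma sum_cnt {n : ℕ} (G : ℕ → ℝ) :
    ∑ y : Fin n → Bool, G (cnt y)
      = ∑ c ∈ range (n+1), (n.choose c : ℝ) * G c := by
  classical
  have h1 : ∑ y : Fin n → Bool, G (cnt y) = ∑ s : Finset (Fin n), G s.card := by
    apply Fintype.sum_bijective (fun s : Finset (Fin n) => fun i => decide (i ∈ s)) ?_ _ _ ?_ |>.symm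
    · constructor
      · intro s t hst
        ext i
        have := congrFun hst i
        simpa using this
      · intro y
        refine ⟨univ.filter fun i => y i, ?_⟩
        funext i; simp
    · intro s
      have hc : cnt (fun i => decide (i ∈ s)) = s.card := by
        unfold cnt
        congr 1
        ext i
        simp
      rw [hc]
  rw [h1]
  have h2 : ∑ s : Finset (Fin n), G s.card
      = ∑ s ∈ (univ : Finset (Fin n)).powerset, G s.card := by
    rw [powerset_univ]
  rw [h2, Finset.sum_powerset_apply_card]
  simp [card_univ, nsmul_eq_mul]

def cube2 (n : ℕ) : Bool × Bool × (Fin n → Bool) ≃ (Fin (n+2) → Bool) where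
  toFun p := Fin.cons p.1 (Fin.cons p.2.1 p.2.2)
  invFun x := (x 0, x 1, fun i => x i.succ.succ)
  left_inv p := by
    obtain ⟨b0, b1, y⟩ := p
    refine Prod.ext rfl (Prod.ext ?_ ?_)
    · show (Fin.cons b0 (Fin.cons b1 y) : Fin (n+2) → Bool) 1 = b1
      rw [show (1 : Fin (n+2)) = Fin.succ 0 from (Fin.succ_zero_eq_one).symm,
        Fin.cons_succ, Fin.cons_zero]
    · funext i
      show (Fin.cons b0 (Fin.cons b1 y) : Fin (n+2) → Bool) i.succ.succ = y i
      rw [Fin.cons_succ, Fin.cons_succ]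
  right_inv x := by
    funext i
    induction i using Fin.cases with
    | zero => rfl
    | succ i =>
      induction i using Fin.cases with
      | zero => rfl
      | succ i => rfl

lemma cube2_zero {n : ℕ} (p : Bool × Bool × (Fin n → Bool)) : cube2 n p 0 = p.1 := rfl

lemma cube2_one {n : ℕ} (p : Bool × Bool × (Fin n → Bool)) : cube2 n p 1 = p.2.1 := by
  show (Fin.cons p.1 (Fin.cons p.2.1 p.2.2) : Fin (n+2) → Bool) 1 = p.2.1
  rw [show (1 : Fin (n+2)) = Fin.succ 0 from (Fin.succ_zero_eq_one).symm,
    Fin.cons_succ, Fin.cons_zero]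

lemma cube2_succ {n : ℕ} (p : Bool × Bool × (Fin n → Bool)) (i : Fin n) :
    cube2 n p i.succ.succ = p.2.2 i := by
  show (Fin.cons p.1 (Fin.cons p.2.1 p.2.2) : Fin (n+2) → Bool) i.succ.succ = p.2.2 i
  rw [Fin.cons_succ, Fin.cons_succ]

lemma master {n : ℕ} (F : Bool → Bool → ℕ → ℝ) :
    ∑ x : Fin (n+2) → Bool, F (x 0) (x 1) (cnt fun i : Fin n => x i.succ.succ)
      = ∑ b0 : Bool, ∑ b1 : Bool, ∑ y : Fin n → Bool, F b0 b1 (cnt y) := by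
  classical
  rw [← Equiv.sum_comp (cube2 n) (fun x : Fin (n+2) → Bool =>
    F (x 0) (x 1) (cnt fun i : Fin n => x i.succ.succ))]
  rw [Fintype.sum_prod_type]
  apply Fintype.sum_congr
  intro b0
  rw [Fintype.sum_prod_type]
  apply Fintype.sum_congr
  intro b1
  apply Fintype.sum_congr
  intro y
  simp only [cube2_zero, cube2_one, cube2_succ]

lemma wsum_eq {n j : ℕ} (x : Fin (n+2) → Bool) :
    ∑ i : Fin (n+2), (if (i : ℕ) = 0 then (j : ℝ) else 1) * pm (x i)
      = (j : ℝ) * pm (x 0) + (pm (x 1)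
          + (2 * (cnt fun i : Fin n => x i.succ.succ) - n)) := by
  rw [Fin.sum_univ_succ]
  rw [Fin.sum_univ_succ]
  have h0 : ((0 : Fin (n+2)) : ℕ) = 0 := rfl
  simp only [h0, if_pos rfl, Fin.val_succ, Nat.succ_ne_zero, if_neg (Nat.succ_ne_zero _),
    one_mul, if_true, if_false]
  rw [sum_pm (fun i : Fin n => x i.succ.succ), Fin.succ_zero_eq_one]

lemma wmon_eq {n j : ℕ} (x : Fin (n+2) → Bool) :
    WMON (n+2) j x = Rsign ((j : ℝ) * pm (x 0) + (pm (x 1)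
          + (2 * (cnt fun i : Fin n => x i.succ.succ) - n))) := by
  rw [WMON, wsum_eq]

lemma wmon_swap {n j : ℕ} (i : Fin (n+2)) (hi : i ≠ 0) (x : Fin (n+2) → Bool) :
    WMON (n+2) j (x ∘ Equiv.swap i 1) = WMON (n+2) j x := by
  unfold WMON
  congr 1
  rw [← Equiv.sum_comp (Equiv.swap i 1)
    (fun m => (if (m : ℕ) = 0 then (j : ℝ) else 1) * pm (x m))]
  apply Fintype.sum_congr
  intro m
  simp only [Function.comp_apply]
  congr 1
  have h01 : (0 : Fin (n+2)) ≠ 1 := by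
    intro hc
    have : ((0:Fin (n+2)):ℕ) = ((1:Fin (n+2)):ℕ) := by rw [hc]
    simpa using this
  have h0fix : Equiv.swap i 1 0 = 0 :=
    Equiv.swap_apply_of_ne_of_ne (Ne.symm hi) h01
  have hswap : ((Equiv.swap i 1 m : Fin (n+2)) : ℕ) = 0 ↔ (m : ℕ) = 0 := by
    rw [← Fin.val_zero (n+2), Fin.val_eq_val, Fin.val_eq_val]
    constructor
    · intro h
      apply (Equiv.swap i 1).injective
      rw [h0fix, h]
    · intro h
      rw [h, h0fix]
  by_cases h : (m : ℕ) = 0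
  · rw [if_pos (hswap.mpr h), if_pos h]
  · rw [if_neg (fun hc => h (hswap.mp hc)), if_neg h]

lemma Rsign_eval (u v : ℕ) (z : ℝ) (hz : z = (u:ℝ) - v) : Rsign z = if v < u then 1 else 0 := by
  unfold Rsign
  simp only [hz, sub_pos, Nat.cast_lt]

lemma num0_eq (l j : ℕ) (hj : 1 ≤ j) :
    ∑ x : Fin (2*l+j+2) → Bool, WMON (2*l+j+2) j x * pm (x 0)
      = ((∑ c ∈ Ico l (l+j), (2*l+j).choose c : ℕ) : ℝ)
        + ((∑ c ∈ Ioc l (l+j), (2*l+j).choose c : ℕ) : ℝ) := by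
  classical
  set n := 2*l+j with hn
  have h1 : ∑ x : Fin (n+2) → Bool, WMON (n+2) j x * pm (x 0)
      = ∑ x : Fin (n+2) → Bool,
        (fun b0 b1 (c : ℕ) => Rsign ((j:ℝ) * pm b0 + (pm b1 + (2*c - n))) * pm b0)
          (x 0) (x 1) (cnt fun i : Fin n => x i.succ.succ) := by
    apply Fintype.sum_congr
    intro x
    rw [wmon_eq]
  have h2 : ∑ x : Fin (n+2) → Bool, WMON (n+2) j x * pm (x 0)
      = ∑ b0 : Bool, ∑ b1 : Bool, ∑ c ∈ range (n+1), (n.choose c : ℝ) *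
          (Rsign ((j:ℝ) * pm b0 + (pm b1 + (2*c - n))) * pm b0) := by
    rw [h1]
    refine (master (fun b0 b1 (c : ℕ) => Rsign ((j:ℝ) * pm b0 + (pm b1 + (2*c - n))) * pm b0)).trans ?_
    apply Fintype.sum_congr
    intro b0
    apply Fintype.sum_congr
    intro b1
    exact sum_cnt (fun c : ℕ => Rsign ((j:ℝ) * pm b0 + (pm b1 + (2*c - n))) * pm b0)
  rw [h2]
  rw [Fintype.sum_bool, Fintype.sum_bool, Fintype.sum_bool]
  rw [← Finset.sum_add_distrib, ← Finset.sum_add_distrib, ← Finset.sum_add_distrib]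
  have hrhs1 : ((∑ c ∈ Ico l (l+j), n.choose c : ℕ) : ℝ)
      = ∑ c ∈ range (n+1), (if c ∈ Ico l (l+j) then (n.choose c : ℝ) else 0) := by
    rw [Finset.sum_ite_mem, Finset.inter_eq_right.mpr ?_, Nat.cast_sum]
    intro c hc
    simp only [mem_Ico] at hc
    simp only [mem_range]
    omega
  have hrhs2 : ((∑ c ∈ Ioc l (l+j), n.choose c : ℕ) : ℝ)
      = ∑ c ∈ range (n+1), (if c ∈ Ioc l (l+j) then (n.choose c : ℝ) else 0) := by
    rw [Finset.sum_ite_mem, Finset.inter_eq_right.mpr ?_, Nat.cast_sum]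
    intro c hc
    simp only [mem_Ioc] at hc
    simp only [mem_range]
    omega
  rw [hrhs1, hrhs2, ← Finset.sum_add_distrib]
  apply Finset.sum_congr rfl
  intro c hc
  simp only [mem_range] at hc
  have e1 : (j:ℝ) * pm true + (pm true + (2*(c:ℕ) - n)) = ((j+1+2*c : ℕ):ℝ) - n := by
    simp only [pm_true]; push_cast; ring
  have e2 : (j:ℝ) * pm true + (pm false + (2*(c:ℕ) - n)) = ((j+2*c : ℕ):ℝ) - (n+1 : ℕ) := by
    simp only [pm_true, pm_false]; push_cast; ring
  have e3 : (j:ℝ) * pm false + (pm true + (2*(c:ℕ) - n)) = ((1+2*c : ℕ):ℝ) - (n+j : ℕ) := by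
    simp only [pm_true, pm_false]; push_cast; ring
  have e4 : (j:ℝ) * pm false + (pm false + (2*(c:ℕ) - n)) = ((2*c : ℕ):ℝ) - (n+j+1 : ℕ) := by
    simp only [pm_true, pm_false]; push_cast; ring
  rw [Rsign_eval _ _ _ e1, Rsign_eval _ _ _ e2, Rsign_eval _ _ _ e3, Rsign_eval _ _ _ e4]
  simp only [pm_true, pm_false, mem_Ico, mem_Ioc]
  have c1 : (n < j+1+2*c) ↔ l ≤ c := by omega
  have c2 : (n+1 < j+2*c) ↔ l+1 ≤ c := by omega
  have c3 : (n+j < 1+2*c) ↔ l+j ≤ c := by omega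
  have c4 : (n+j+1 < 2*c) ↔ l+j+1 ≤ c := by omega
  simp only [c1, c2, c3, c4]
  split_ifs <;> first | ring1 | (exfalso; omega)

lemma num1_eq (l j : ℕ) (hj : 1 ≤ j) :
    ∑ x : Fin (2*l+j+2) → Bool, WMON (2*l+j+2) j x * pm (x 1)
      = ((2*l+j).choose l : ℝ) + ((2*l+j).choose (l+j) : ℝ) := by
  classical
  set n := 2*l+j with hn
  have h1 : ∑ x : Fin (n+2) → Bool, WMON (n+2) j x * pm (x 1)
      = ∑ x : Fin (n+2) → Bool,
        (fun b0 b1 (c : ℕ) => Rsign ((j:ℝ) * pm b0 + (pm b1 + (2*c - n))) * pm b1)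
          (x 0) (x 1) (cnt fun i : Fin n => x i.succ.succ) := by
    apply Fintype.sum_congr
    intro x
    rw [wmon_eq]
  have h2 : ∑ x : Fin (n+2) → Bool, WMON (n+2) j x * pm (x 1)
      = ∑ b0 : Bool, ∑ b1 : Bool, ∑ c ∈ range (n+1), (n.choose c : ℝ) *
          (Rsign ((j:ℝ) * pm b0 + (pm b1 + (2*c - n))) * pm b1) := by
    rw [h1]
    refine (master (fun b0 b1 (c : ℕ) => Rsign ((j:ℝ) * pm b0 + (pm b1 + (2*c - n))) * pm b1)).trans ?_
    apply Fintype.sum_congr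
    intro b0
    apply Fintype.sum_congr
    intro b1
    exact sum_cnt (fun c : ℕ => Rsign ((j:ℝ) * pm b0 + (pm b1 + (2*c - n))) * pm b1)
  rw [h2]
  rw [Fintype.sum_bool, Fintype.sum_bool, Fintype.sum_bool]
  rw [← Finset.sum_add_distrib, ← Finset.sum_add_distrib, ← Finset.sum_add_distrib]
  have hrhs1 : ((n.choose l : ℕ) : ℝ)
      = ∑ c ∈ range (n+1), (if c = l then (n.choose c : ℝ) else 0) := by
    rw [Finset.sum_ite_eq' (range (n+1)) l (fun c => (n.choose c : ℝ))]
    rw [if_pos (by simp only [mem_range]; omega)]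
  have hrhs2 : ((n.choose (l+j) : ℕ) : ℝ)
      = ∑ c ∈ range (n+1), (if c = l+j then (n.choose c : ℝ) else 0) := by
    rw [Finset.sum_ite_eq' (range (n+1)) (l+j) (fun c => (n.choose c : ℝ))]
    rw [if_pos (by simp only [mem_range]; omega)]
  rw [hrhs1, hrhs2, ← Finset.sum_add_distrib]
  apply Finset.sum_congr rfl
  intro c hc
  simp only [mem_range] at hc
  have e1 : (j:ℝ) * pm true + (pm true + (2*(c:ℕ) - n)) = ((j+1+2*c : ℕ):ℝ) - n := by
    simp only [pm_true]; push_cast; ring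
  have e2 : (j:ℝ) * pm true + (pm false + (2*(c:ℕ) - n)) = ((j+2*c : ℕ):ℝ) - (n+1 : ℕ) := by
    simp only [pm_true, pm_false]; push_cast; ring
  have e3 : (j:ℝ) * pm false + (pm true + (2*(c:ℕ) - n)) = ((1+2*c : ℕ):ℝ) - (n+j : ℕ) := by
    simp only [pm_true, pm_false]; push_cast; ring
  have e4 : (j:ℝ) * pm false + (pm false + (2*(c:ℕ) - n)) = ((2*c : ℕ):ℝ) - (n+j+1 : ℕ) := by
    simp only [pm_true, pm_false]; push_cast; ring
  rw [Rsign_eval _ _ _ e1, Rsign_eval _ _ _ e2, Rsign_eval _ _ _ e3, Rsign_eval _ _ _ e4]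
  simp only [pm_true, pm_false]
  have c1 : (n < j+1+2*c) ↔ l ≤ c := by omega
  have c2 : (n+1 < j+2*c) ↔ l+1 ≤ c := by omega
  have c3 : (n+j < 1+2*c) ↔ l+j ≤ c := by omega
  have c4 : (n+j+1 < 2*c) ↔ l+j+1 ≤ c := by omega
  simp only [c1, c2, c3, c4]
  split_ifs <;> first | ring1 | (exfalso; omega)

lemma choose_anti (n r : ℕ) (hn : n ≤ 2*r) : ∀ s : ℕ, r ≤ s → n.choose s ≤ n.choose r := by
  intro s
  induction s with
  | zero =>
    intro h
    have : r = 0 := Nat.le_zero.mp h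
    simp [this]
  | succ s ih =>
    intro h
    rcases Nat.lt_or_ge r (s+1) with h' | h'
    · have hrs : r ≤ s := by omega
      have step : n.choose (s+1) ≤ n.choose s := by
        have key := Nat.choose_succ_right_eq n s
        have h1 : n - s ≤ s + 1 := by omega
        have h2 : n.choose (s+1) * (s+1) ≤ n.choose s * (s+1) := by
          calc n.choose (s+1) * (s+1) = n.choose s * (n - s) := key
          _ ≤ n.choose s * (s+1) := Nat.mul_le_mul_left _ h1
        exact Nat.le_of_mul_le_mul_right h2 (Nat.succ_pos s)
      exact step.trans (ih hrs)
    · have : r = s+1 := by omega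
      simp [this]

lemma choose_unimodal (l j c : ℕ) (hlc : l ≤ c) (hc : c ≤ l + j) :
    (2*l+j).choose (l+j) ≤ (2*l+j).choose c := by
  set n := 2*l+j with hn
  rcases Nat.lt_or_ge c (l + (j+1)/2) with h' | h'
  · have hcn : c ≤ n := by omega
    rw [← Nat.choose_symm hcn]
    apply choose_anti n (n - c) _ (l+j) (by omega)
    omega
  · exact choose_anti n c (by omega) (l+j) hc

lemma choose_prod (n : ℕ) : ∀ (t r : ℕ), r + t ≤ n →
    n.choose r * ∏ i ∈ range t, (n - r - i) = n.choose (r+t) * ∏ i ∈ range t, (r+1+i) := by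
  intro t
  induction t with
  | zero => intro r _; simp
  | succ t ih =>
    intro r hr
    rw [prod_range_succ, prod_range_succ, ← mul_assoc, ← mul_assoc, ih r (by omega)]
    have key := Nat.choose_succ_right_eq n (r+t)
    have h1 : n - r - t = n - (r+t) := by omega
    have h2 : r + 1 + t = r + t + 1 := by omega
    rw [h1, h2]
    rw [mul_assoc, mul_comm (∏ i ∈ range t, (r+1+i)) (n - (r+t)), ← mul_assoc]
    rw [← key]
    have h3 : r + (t+1) = r + t + 1 := by omega
    rw [h3]
    ring

lemma pow_ratio (j t : ℕ) (p q : ℝ) (hq : 0 < q) (hpq : q ≤ p) (hj : 2 ≤ j)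
    (h : (t:ℝ) * (p - q) ≤ q / (3*j)) : ((j:ℝ)-1) * p^t < (j:ℝ) * q^t := by
  have hjr : (2:ℝ) ≤ j := by exact_mod_cast hj
  have hj0 : (0:ℝ) < j := by linarith
  rcases Nat.eq_zero_or_pos t with ht0 | ht1
  · subst ht0; simp only [pow_zero, mul_one]; linarith
  have ht1' : (1:ℝ) ≤ t := by exact_mod_cast ht1
  set d : ℝ := (p - q)/q with hd
  have hd0 : 0 ≤ d := div_nonneg (by linarith) hq.le
  have hp_eq : p = q*(1+d) := by rw [hd, mul_add, mul_one, mul_div_assoc', mul_comm q (p-q), mul_div_assoc, div_self hq.ne', mul_one]; ring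
  have htd : (t:ℝ)*d ≤ 1/(3*j) := by
    rw [hd, mul_div_assoc' (t:ℝ) _ q]
    rw [div_le_div_iff₀ hq (by positivity)]
    calc (t:ℝ)*(p-q)*(3*j) ≤ (q/(3*j))*(3*j) := by
          apply mul_le_mul_of_nonneg_right h (by positivity)
      _ = q := by field_simp
      _ = 1 * q := (one_mul q).symm
  have htd6 : (t:ℝ)*d ≤ 1/6 := by
    refine htd.trans ?_
    rw [div_le_div_iff₀ (by positivity) (by norm_num)]
    linarith
  have hd1 : d ≤ 1/2 := by nlinarith
  have hb : 1 - (t:ℝ)*d ≤ (1-d)^t := by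
    have := one_add_mul_le_pow (a := -d) (by linarith) t
    calc 1 - (t:ℝ)*d = 1 + t*(-d) := by ring
      _ ≤ (1 + -d)^t := this
      _ = (1-d)^t := by ring_nf
  have hpos1 : 0 < 1 - (t:ℝ)*d := by linarith
  have h1d : 0 < 1 - d := by linarith
  have hprod : (1+d)^t * (1-d)^t ≤ 1 := by
    rw [← mul_pow]
    have he : (1+d)*(1-d) = 1 - d^2 := by ring
    rw [he]
    apply pow_le_one₀ (by nlinarith) (by nlinarith)
  have hup : (1+d)^t ≤ 1/(1 - (t:ℝ)*d) := by
    rw [le_div_iff₀ hpos1]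
    calc (1+d)^t * (1-(t:ℝ)*d) ≤ (1+d)^t * (1-d)^t := by
          apply mul_le_mul_of_nonneg_left hb (pow_nonneg (by linarith) t)
      _ ≤ 1 := hprod
  have hqt : 0 < q^t := pow_pos hq t
  have hjtd : (j:ℝ)*((t:ℝ)*d) ≤ 1/3 := by
    calc (j:ℝ)*((t:ℝ)*d) ≤ (j:ℝ)*(1/(3*j)) := by
          apply mul_le_mul_of_nonneg_left htd hj0.le
      _ = 1/3 := by field_simp
  have hmain : ((j:ℝ)-1)*(1+d)^t < j := by
    have h2 : ((j:ℝ)-1)*(1+d)^t ≤ (j-1)*(1/(1-(t:ℝ)*d)) :=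
      mul_le_mul_of_nonneg_left hup (by linarith)
    have h3 : ((j:ℝ)-1)*(1/(1-(t:ℝ)*d)) < j := by
      rw [mul_one_div, div_lt_iff₀ hpos1]
      nlinarith
    linarith
  calc ((j:ℝ)-1)*p^t = (((j:ℝ)-1)*(1+d)^t)*q^t := by rw [hp_eq, mul_pow]; ring
    _ < j*q^t := by apply mul_lt_mul_of_pos_right hmain hqt

lemma key_ineq (l j : ℕ) (hj : 2 ≤ j) (hl : 7*j^3 ≤ 2*l+j+2) :
    (j-1) * (2*l+j).choose ((2*l+j)/2) < j * (2*l+j).choose (l+j) := by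
  have hj3 : j + 2 ≤ j^3 := by
    have h1 : 2*j ≤ j*j := Nat.mul_le_mul_right j hj
    have h2 : j*j ≤ j*(j*j) := Nat.le_mul_of_pos_left _ (by omega)
    have h3 : j^3 = j*(j*j) := by ring
    omega
  have hl3 : 3*j^3 ≤ l := by omega
  have hdiv : 2*((2*l+j)/2) ≤ 2*l+j ∧ 2*l+j ≤ 2*((2*l+j)/2)+1 := by omega
  obtain ⟨m, hgm⟩ : ∃ m, (2*l+j)/2 = m := ⟨_, rfl⟩
  rw [hgm] at hdiv ⊢
  obtain ⟨t, hgt⟩ : ∃ t, t = l + j - m := ⟨_, rfl⟩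
  have hmt : m + t = l + j := by omega
  have h2t : 2*t ≤ j+1 := by omega
  have ht2 : j ≤ 2*t := by omega
  have hnm : 2*l+j - m = l + t := by omega
  have hmn : m ≤ 2*l+j := by omega
  have htl : t ≤ l + 1 := by omega
  set n := 2*l+j with hn
  have hprod := choose_prod n t m (by omega)
  rw [hmt] at hprod
  have hP : (l+1)^t ≤ ∏ x ∈ range t, (n - m - x) := by
    have hc : (l+1)^t = ∏ _x ∈ range t, (l+1) := by rw [Finset.prod_const, card_range]
    rw [hc]
    apply Finset.prod_le_prod'
    intro x hx
    simp only [mem_range] at hx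
    omega
  have hQ : ∏ x ∈ range t, (m+1+x) ≤ (l+j)^t := by
    have hc : (l+j)^t = ∏ _x ∈ range t, (l+j) := by rw [Finset.prod_const, card_range]
    rw [hc]
    apply Finset.prod_le_prod'
    intro x hx
    simp only [mem_range] at hx
    omega
  have hch_pos : 0 < n.choose (l+j) := Nat.choose_pos (by omega)
  have hreal : ((j:ℝ)-1) * ((l:ℝ)+(j:ℝ))^t < (j:ℝ) * ((l:ℝ)+1)^t := by
    apply pow_ratio j t _ _ (by positivity) (by push_cast; linarith [(show (1:ℝ) ≤ j by exact_mod_cast (by omega : 1 ≤ j))]) hj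
    rw [le_div_iff₀ (by positivity)]
    have c1 : (2*(t:ℝ)) ≤ (j:ℝ)+1 := by exact_mod_cast h2t
    have c3 : (2:ℝ) ≤ (j:ℝ) := by exact_mod_cast hj
    have c4 : (3:ℝ)*(j:ℝ)^3 ≤ l := by exact_mod_cast hl3
    push_cast
    nlinarith [c1, c3, c4, sq_nonneg ((j:ℝ)-1), sq_nonneg (j:ℝ)]
  have hN : (j-1) * (l+j)^t < j * (l+1)^t := by
    have hcast : (((j-1) * (l+j)^t : ℕ) : ℝ) < ((j * (l+1)^t : ℕ) : ℝ) := by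
      push_cast [Nat.cast_sub (show 1 ≤ j by omega)]
      exact hreal
    exact_mod_cast hcast
  have hPpos : 0 < ∏ x ∈ range t, (n - m - x) :=
    lt_of_lt_of_le (pow_pos (Nat.succ_pos l) t) hP
  have chain : (j-1) * n.choose m * (∏ x ∈ range t, (n - m - x))
      < j * n.choose (l+j) * (∏ x ∈ range t, (n - m - x)) := by
    calc (j-1) * n.choose m * (∏ x ∈ range t, (n - m - x))
        = (j-1) * (n.choose (l+j) * ∏ x ∈ range t, (m+1+x)) := by rw [mul_assoc, hprod]
      _ ≤ (j-1) * (n.choose (l+j) * (l+j)^t) := by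
          apply Nat.mul_le_mul_left
          exact Nat.mul_le_mul_left _ hQ
      _ = n.choose (l+j) * ((j-1) * (l+j)^t) := by ring
      _ < n.choose (l+j) * (j * (l+1)^t) := by
          exact mul_lt_mul_of_pos_left hN hch_pos
      _ ≤ n.choose (l+j) * (j * ∏ x ∈ range t, (n - m - x)) := by
          apply Nat.mul_le_mul_left
          exact Nat.mul_le_mul_left _ hP
      _ = j * n.choose (l+j) * (∏ x ∈ range t, (n - m - x)) := by ring
  exact Nat.lt_of_mul_lt_mul_right chain

lemma choose_symm' (l j : ℕ) : (2*l+j).choose l = (2*l+j).choose (l+j) := by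
  have h : l + j ≤ 2*l+j := by omega
  have := Nat.choose_symm h
  rw [show 2*l+j - (l+j) = l by omega] at this
  exact this

lemma claimB (l j : ℕ) :
    (2*l+j).choose l + (2*l+j).choose (l+j) = 2 * (2*l+j).choose (l+j) := by
  rw [choose_symm']; ring

lemma claim1 (l j : ℕ) (hj : 2 ≤ j) :
    (j-1) * ((2*l+j).choose l + (2*l+j).choose (l+j))
      < (∑ c ∈ Ico l (l+j), (2*l+j).choose c) + (∑ c ∈ Ioc l (l+j), (2*l+j).choose c) := by
  set n := 2*l+j with hn
  have hpos : 0 < n.choose (l+j) := Nat.choose_pos (by omega)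
  have h1 : j * n.choose (l+j) ≤ ∑ c ∈ Ico l (l+j), n.choose c := by
    have := Finset.card_nsmul_le_sum (Ico l (l+j)) (fun c => n.choose c) (n.choose (l+j)) ?_
    · simpa [Nat.card_Ico, smul_eq_mul] using this
    · intro c hc
      simp only [mem_Ico] at hc
      exact choose_unimodal l j c hc.1 (by omega)
  have h2 : j * n.choose (l+j) ≤ ∑ c ∈ Ioc l (l+j), n.choose c := by
    have := Finset.card_nsmul_le_sum (Ioc l (l+j)) (fun c => n.choose c) (n.choose (l+j)) ?_
    · simpa [Nat.card_Ioc, smul_eq_mul] using this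
    · intro c hc
      simp only [mem_Ioc] at hc
      exact choose_unimodal l j c (by omega) hc.2
  calc (j-1) * (n.choose l + n.choose (l+j))
      = (j-1) * (2 * n.choose (l+j)) := by rw [claimB]
    _ < j * (2 * n.choose (l+j)) := by
        apply Nat.mul_lt_mul_of_pos_right (by omega) (by omega)
    _ = j * n.choose (l+j) + j * n.choose (l+j) := by ring
    _ ≤ _ := Nat.add_le_add h1 h2

lemma claim2 (l j : ℕ) (hj : 2 ≤ j) (hl : 7*j^3 ≤ 2*l+j+2) :
    (∑ c ∈ Ico l (l+j), (2*l+j).choose c) + (∑ c ∈ Ioc l (l+j), (2*l+j).choose c)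
      < (j+1) * ((2*l+j).choose l + (2*l+j).choose (l+j)) := by
  set n := 2*l+j with hn
  have hIco : Ico l (l+j) = insert l (Ico (l+1) (l+j)) := by
    ext c; simp only [mem_Ico, mem_insert, mem_Ico]; omega
  have hIoc : Ioc l (l+j) = insert (l+j) (Ico (l+1) (l+j)) := by
    ext c; simp only [mem_Ioc, mem_insert, mem_Ico]; omega
  have hS1 : ∑ c ∈ Ico l (l+j), n.choose c
      = n.choose l + ∑ c ∈ Ico (l+1) (l+j), n.choose c := by
    rw [hIco, Finset.sum_insert (by simp [mem_Ico])]
  have hS2 : ∑ c ∈ Ioc l (l+j), n.choose c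
      = n.choose (l+j) + ∑ c ∈ Ico (l+1) (l+j), n.choose c := by
    rw [hIoc, Finset.sum_insert (by simp [mem_Ico])]
  have hSmid : ∑ c ∈ Ico (l+1) (l+j), n.choose c ≤ (j-1) * n.choose (n/2) := by
    have := Finset.sum_le_card_nsmul (Ico (l+1) (l+j)) (fun c => n.choose c) (n.choose (n/2))
      (fun c _ => Nat.choose_le_middle c n)
    simpa [Nat.card_Ico, smul_eq_mul, show l+j-(l+1) = j-1 by omega] using this
  have hkey := key_ineq l j hj hl
  have hB := claimB l j
  rw [hS1, hS2]
  calc n.choose l + (∑ c ∈ Ico (l+1) (l+j), n.choose c)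
        + (n.choose (l+j) + ∑ c ∈ Ico (l+1) (l+j), n.choose c)
      = (n.choose l + n.choose (l+j)) + 2 * ∑ c ∈ Ico (l+1) (l+j), n.choose c := by ring
    _ ≤ (n.choose l + n.choose (l+j)) + 2 * ((j-1) * n.choose (n/2)) := by
        apply Nat.add_le_add_left
        exact Nat.mul_le_mul_left 2 hSmid
    _ < (n.choose l + n.choose (l+j)) + 2 * (j * n.choose (l+j)) := by
        apply Nat.add_lt_add_left
        exact Nat.mul_lt_mul_of_pos_left hkey (by norm_num)
    _ = (n.choose l + n.choose (l+j)) + j * (n.choose l + n.choose (l+j)) := by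
        rw [hB]; ring
    _ = (j+1) * (n.choose l + n.choose (l+j)) := by ring

lemma Rsign_div (y c : ℝ) (hc : 0 < c) : Rsign (y/c) = Rsign y := by
  unfold Rsign
  by_cases h : 0 < y
  · rw [if_pos h, if_pos (div_pos h hc)]
  · push_neg at h
    rw [if_neg (by push_neg; exact div_nonpos_of_nonpos_of_nonneg h hc.le),
      if_neg (by push_neg; exact h)]

lemma sign_compare (j A B : ℕ) (e : ℤ) (hB : 0 < B)
    (h1 : ((j:ℤ)-1)*B < A) (h2 : (A:ℤ) < ((j:ℤ)+1)*B) (hpar : Odd (e + j)) (b0 : Bool) :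
    Rsign ((j:ℝ) * pm b0 + (e:ℝ)) = Rsign ((A:ℝ) * pm b0 + (B:ℝ) * (e:ℝ)) := by
  have hBz : (0:ℤ) < (B:ℤ) := by exact_mod_cast hB
  obtain ⟨w, hw⟩ := hpar
  cases b0 with
  | true =>
    simp only [pm_true, mul_one]
    rcases lt_or_ge 0 ((j:ℤ) + e) with he | he
    · have he1 : 1 - (j:ℤ) ≤ e := by omega
      have hpos : (0:ℤ) < A + B*e := by nlinarith
      unfold Rsign
      rw [if_pos (by exact_mod_cast (show (0:ℤ) < (j:ℤ) + e from he)),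
        if_pos (by exact_mod_cast hpos)]
    · have he1 : e ≤ -(j:ℤ) - 1 := by omega
      have hneg : A + B*e ≤ 0 := by nlinarith
      unfold Rsign
      rw [if_neg (by push_neg; exact_mod_cast (show (j:ℤ) + e ≤ 0 from he)),
        if_neg (by push_neg; exact_mod_cast hneg)]
  | false =>
    simp only [pm_false, mul_neg_one]
    have hrw1 : -(j:ℝ) + (e:ℝ) = (((-(j:ℤ)) + e : ℤ) : ℝ) := by push_cast; ring
    have hrw2 : -(A:ℝ) + (B:ℝ)*(e:ℝ) = (((-(A:ℤ)) + B*e : ℤ) : ℝ) := by push_cast; ring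
    rcases lt_or_ge 0 (-(j:ℤ) + e) with he | he
    · have he1 : (j:ℤ) + 1 ≤ e := by omega
      have hpos : (0:ℤ) < -A + B*e := by nlinarith
      unfold Rsign
      rw [if_pos (by rw [hrw1]; exact_mod_cast he), if_pos (by rw [hrw2]; exact_mod_cast hpos)]
    · have he1 : e ≤ (j:ℤ) - 1 := by omega
      have hneg : -(A:ℤ) + B*e ≤ 0 := by nlinarith
      unfold Rsign
      rw [if_neg (by push_neg; rw [hrw1]; exact_mod_cast he),
        if_neg (by push_neg; rw [hrw2]; exact_mod_cast hneg)]

theorem stmt_9 (j k : ℕ) (hj : 2 ≤ j) (hk : 7 * j ^ 3 ≤ k) (he : Even (k + j)) :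
    ∀ x : Fin k → Bool,
      WMON k j x = Rsign (∑ i : Fin k, chow k (WMON k j) i * pm (x i)) := by
  have hjj : j ≤ j^3 := Nat.le_self_pow (by norm_num) j
  obtain ⟨w, hw⟩ := he
  obtain ⟨l, rfl⟩ : ∃ l, k = 2*l+j+2 := ⟨(k-j-2)/2, by omega⟩
  intro x
  have hj1 : 1 ≤ j := by omega
  have hA1 := claim1 l j hj
  have hA2 := claim2 l j hj hk
  set S1 := ∑ c ∈ Ico l (l+j), (2*l+j).choose c with hS1def
  set S2 := ∑ c ∈ Ioc l (l+j), (2*l+j).choose c with hS2def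
  set B := (2*l+j).choose l + (2*l+j).choose (l+j) with hBdef
  have hBpos : 0 < B := by
    rw [hBdef]
    have := Nat.choose_pos (show l+j ≤ 2*l+j by omega)
    omega
  have hch0 : chow (2*l+j+2) (WMON (2*l+j+2) j) 0 = ((S1 + S2 : ℕ):ℝ)/2^(2*l+j+2) := by
    rw [chow, num0_eq l j hj1, hS1def, hS2def]
    push_cast
    ring
  have hch1 : chow (2*l+j+2) (WMON (2*l+j+2) j) 1 = ((B : ℕ):ℝ)/2^(2*l+j+2) := by
    rw [chow, num1_eq l j hj1, hBdef]
    push_cast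
    ring
  have hchi : ∀ i : Fin (2*l+j+1),
      chow (2*l+j+2) (WMON (2*l+j+2) j) i.succ = ((B : ℕ):ℝ)/2^(2*l+j+2) := by
    intro i
    rw [← hch1, chow, chow]
    congr 1
    have hi : (i.succ : Fin (2*l+j+2)) ≠ 0 := by
      intro hc
      have := congrArg Fin.val hc
      simp [Fin.val_succ] at this
    have hcomp := Equiv.sum_comp (Equiv.arrowCongr (Equiv.swap (i.succ) (1 : Fin (2*l+j+2))) (Equiv.refl Bool))
      (fun y : Fin (2*l+j+2) → Bool => WMON (2*l+j+2) j y * pm (y i.succ))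
    rw [← hcomp]
    apply Fintype.sum_congr
    intro y
    have hΨ : (Equiv.arrowCongr (Equiv.swap (i.succ) (1 : Fin (2*l+j+2))) (Equiv.refl Bool)) y
        = y ∘ Equiv.swap i.succ 1 := by
      funext m
      simp [Equiv.arrowCongr]
    rw [hΨ]
    rw [wmon_swap i.succ hi y]
    have : (y ∘ Equiv.swap i.succ (1 : Fin (2*l+j+2))) i.succ = y 1 := by
      simp [Equiv.swap_apply_left]
    rw [this]
  have hdecomp : ∑ i : Fin (2*l+j+2), chow (2*l+j+2) (WMON (2*l+j+2) j) i * pm (x i)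
      = (((S1+S2 : ℕ):ℝ) * pm (x 0) + ((B:ℕ):ℝ) * (pm (x 1)
          + (2 * (cnt fun i : Fin (2*l+j) => x i.succ.succ) - ((2*l+j : ℕ):ℝ)))) / 2^(2*l+j+2) := by
    rw [Fin.sum_univ_succ]
    rw [hch0]
    have hrw : ∀ i : Fin (2*l+j+1),
        chow (2*l+j+2) (WMON (2*l+j+2) j) i.succ * pm (x i.succ)
          = ((B : ℕ):ℝ)/2^(2*l+j+2) * pm (x i.succ) := fun i => by rw [hchi i]
    rw [Fintype.sum_congr _ _ hrw, ← Finset.mul_sum]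
    have hs : ∑ i : Fin (2*l+j+1), pm (x i.succ)
        = pm (x 1) + (2 * ((cnt fun i : Fin (2*l+j) => x i.succ.succ) : ℝ) - ((2*l+j : ℕ):ℝ)) := by
      rw [Fin.sum_univ_succ, Fin.succ_zero_eq_one, sum_pm]
    rw [hs]
    ring
  rw [hdecomp, Rsign_div _ _ (by positivity), wmon_eq x]
  set c2 := cnt fun i : Fin (2*l+j) => x i.succ.succ with hc2
  have hE : ∃ e : ℤ, (pm (x 1) + (2 * (c2:ℝ) - ((2*l+j : ℕ):ℝ)) = (e:ℝ)) ∧ Odd (e + j) := by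
    rcases hx1 : x 1 with h|h
    · refine ⟨-1 + 2*(c2:ℤ) - (2*l+j:ℕ), ?_, ?_⟩
      · simp [pm, hx1]; push_cast; ring
      · rw [Int.odd_iff]; omega
    · refine ⟨1 + 2*(c2:ℤ) - (2*l+j:ℕ), ?_, ?_⟩
      · simp [pm, hx1]; push_cast; ring
      · rw [Int.odd_iff]; omega
  obtain ⟨e, hE, hodd⟩ := hE
  rw [hE]
  apply sign_compare j (S1+S2) B e hBpos ?_ ?_ hodd (x 0)
  · have : ((j-1) * B : ℕ) < ((S1 + S2 : ℕ)) := hA1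
    zify [hj1] at this
    exact_mod_cast this
  · exact_mod_cast hA2
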